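/- For a set A with at least two elements that injects into 𝒫(η) for an ordinal η via e, the set f(A) = {a ∈ A : min(⋃_{a∈A} e(a) \ ⋂_{a∈A} e(a)) ∉ e(a)} is a nonempty proper subset of A. -/

import Mathlib

universe u v

theorem kw_split_nonempty_proper (A : Type u) (η : Ordinal.{v})
    (e : A → Set η.ToType) (he : Function.Injective e)
    (a₀ b₀ : A) (hab : a₀ ≠ b₀) :
    ∃ m : η.ToType, IsLeast ((⋃ a, e a) \ (⋂ a, e a)) m ∧
      {a : A | m ∉ e a}.Nonempty ∧ {a : A | m ∉ e a} ≠ Set.univ := by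
  have hne : e a₀ ≠ e b₀ := fun h => hab (he h)
  obtain ⟨x, hx⟩ := Set.symmDiff_nonempty.mpr hne
  have hS : ((⋃ a, e a) \ (⋂ a, e a)).Nonempty := by
    rcases hx with ⟨h1, h2⟩ | ⟨h1, h2⟩
    · exact ⟨x, Set.mem_iUnion.mpr ⟨a₀, h1⟩, fun hx => h2 (Set.mem_iInter.mp hx b₀)⟩
    · exact ⟨x, Set.mem_iUnion.mpr ⟨b₀, h1⟩, fun hx => h2 (Set.mem_iInter.mp hx a₀)⟩
  obtain ⟨m, hmS, hmin⟩ := (IsWellFounded.wf (α := η.ToType) (r := (· < ·))).has_min _ hS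
  refine ⟨m, ⟨hmS, fun y hy => not_lt.mp (hmin y hy)⟩, ?_, ?_⟩
  · have h2 := hmS.2
    rw [Set.mem_iInter] at h2
    push_neg at h2
    exact h2
  · obtain ⟨a, ha⟩ := Set.mem_iUnion.mp hmS.1
    intro h
    have : a ∈ {a : A | m ∉ e a} := h ▸ Set.mem_univ a
    exact this ha
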